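/- The element δ³ generates the center of B₃: in the band presentation of B₃, the center of the group equals the cyclic subgroup generated by δ³ (equivalently, in the classical presentation, the center of B₃ equals the cyclic subgroup generated by (σ₂σ₁)³). -/

import Mathlib

section WordLemmas

open Monoid CoprodI

variable {ι : Type*} [DecidableEq ι] {G : ι → Type*} [∀ i, Group (G i)]
  [∀ i, DecidableEq (G i)]

lemma exists_word_append (w : CoprodI.Word G) {k : ι} (c : G k) (hc : c ≠ 1)
    (hlast : ∀ l ∈ w.toList.getLast?, Sigma.fst l ≠ k) :
    ∃ u : CoprodI.Word G, u.prod = w.prod * CoprodI.of c ∧ u.toList = w.toList ++ [⟨k, c⟩] := by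
  induction w using CoprodI.Word.consRecOn with
  | empty =>
    refine ⟨Word.cons c Word.empty (by simp [Word.fstIdx]) hc, ?_, ?_⟩
    · simp [Word.prod_cons]
    · simp [Word.cons]
  | cons i m w' h1 h2 ih =>
    have hlast' : ∀ l ∈ w'.toList.getLast?, Sigma.fst l ≠ k := by
      intro l hl
      apply hlast
      rcases hw' : w'.toList with _ | ⟨x, xs⟩
      · rw [hw'] at hl; simp at hl
      · rw [hw'] at hl
        simpa [Word.cons, hw', List.getLast?_cons_cons] using hl
    obtain ⟨u', hu'prod, hu'list⟩ := ih hlast'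
    have hik : ∀ (h : w'.toList = []), i ≠ k := by
      intro h
      have := hlast ⟨i, m⟩ (by simp [Word.cons, h])
      simpa using this
    have hfst : u'.fstIdx ≠ some i := by
      rcases hw' : w'.toList with _ | ⟨x, xs⟩
      · have : u'.toList = [⟨k, c⟩] := by rw [hu'list, hw']; simp
        simp only [Word.fstIdx, this]
        simpa using fun h => (hik hw') h.symm
      · have : u'.toList = x :: (xs ++ [⟨k, c⟩]) := by rw [hu'list, hw']; simp
        simp only [Word.fstIdx, this]
        have := h1
        rw [Word.fstIdx, hw'] at this
        simpa using this
    refine ⟨Word.cons m u' hfst h2, ?_, ?_⟩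
    · rw [Word.prod_cons, hu'prod, Word.prod_cons, mul_assoc]
    · simp [Word.cons, hu'list]

lemma smul_length_le (w : CoprodI.Word G) {k : ι} (hk : w.fstIdx = some k) (c : G k) :
    (CoprodI.of c • w).toList.length ≤ w.toList.length := by
  induction w using CoprodI.Word.consRecOn with
  | empty => simp [Word.fstIdx] at hk
  | cons i m w' h1 h2 _ =>
    have hik : i = k := by
      simp only [Word.fstIdx, Word.cons] at hk
      simpa using hk
    subst hik
    have hR : (Word.cons m w' h1 h2).toList.length = w'.toList.length + 1 := by
      simp [Word.cons]
    rw [hR, Word.cons_eq_smul, smul_smul, ← MonoidHom.map_mul]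
    rw [Word.of_smul_def, Word.equivPair_eq_of_fstIdx_ne h1]
    simp only [Word.rcons]
    split_ifs
    · simp [Word.cons]
    · simp [Word.cons]

lemma central_eq_one (hnt : ∀ j : ι, ∃ k, k ≠ j ∧ ∃ c : G k, c ≠ 1)
    {p : Monoid.CoprodI G} (hp : ∀ q : Monoid.CoprodI G, q * p = p * q) : p = 1 := by
  by_contra hp1
  set w : CoprodI.Word G := CoprodI.Word.equiv p with hw
  have hprod : w.prod = p := Word.equiv.symm_apply_apply p
  have hne : w.toList ≠ [] := by
    intro h
    apply hp1
    have : w = Word.empty := Word.ext h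
    rw [← hprod, this, Word.prod_empty]
  obtain ⟨k, hkj, c, hc⟩ := hnt (w.toList.getLast hne).1
  have hlast : ∀ l ∈ w.toList.getLast?, Sigma.fst l ≠ k := by
    intro l hl
    rw [List.getLast?_eq_some_getLast hne] at hl
    simp only [Option.mem_some_iff] at hl
    rw [← hl]
    exact fun h => hkj h.symm
  obtain ⟨u, huprod, hulist⟩ := exists_word_append w c hc hlast
  have hsmul : CoprodI.of c • w = u := by
    have h1 : CoprodI.of c • w = Word.equiv (CoprodI.of c * p) := by
      rw [hw]
      show _ = (CoprodI.of c * p) • Word.empty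
      rw [mul_smul]
      rfl
    have h2 : Word.equiv (CoprodI.of c * p) = u := by
      rw [hp (CoprodI.of c)]
      rw [Equiv.apply_eq_iff_eq_symm_apply]
      show p * CoprodI.of c = u.prod
      rw [huprod, hprod]
    rw [h1, h2]
  by_cases hcase : w.fstIdx = some k
  · have hle := smul_length_le w hcase c
    rw [hsmul, hulist] at hle
    simp at hle
  · have hconseq : (Word.cons c w hcase hc).toList = u.toList := by
      rw [← hsmul, Word.cons_eq_smul]
    rw [Word.cons_toList, hulist] at hconseq
    have hhead : some (⟨k, c⟩ : Σ i, G i) = w.toList.head? := by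
      have := congrArg (fun l => l.head?) hconseq
      simp only [List.head?_cons, List.head?_append, List.head?_eq_head hne,
        Option.or_some] at this ⊢
      exact this
    apply hcase
    rw [Word.fstIdx, ← hhead]
    rfl


end WordLemmas

set_option linter.unusedSectionVars false


/-- The band relations `a₂a₁ = a₃a₂ = a₁a₃`, with subscripts taken modulo 3
(the generator `a₃` is indexed by `0 : ZMod 3`). -/
def bandRels : Set (FreeGroup (ZMod 3)) :=
  { FreeGroup.of 2 * FreeGroup.of 1 * (FreeGroup.of 0 * FreeGroup.of 2)⁻¹,
    FreeGroup.of 0 * FreeGroup.of 2 * (FreeGroup.of 1 * FreeGroup.of 0)⁻¹ }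

/-- The band-presented group `⟨a₁, a₂, a₃ | a₂a₁ = a₃a₂ = a₁a₃⟩` (a model of `B₃`). -/
abbrev BandB3 := PresentedGroup bandRels

/-- The band generators `a i`, indexed by `ZMod 3` (so `a 0 = a₃`). -/
def a (i : ZMod 3) : BandB3 := PresentedGroup.of i

/-- The fundamental element `δ = a₂a₁ (= a₃a₂ = a₁a₃)`, corresponding to `σ₂σ₁`
in the classical presentation. -/
def δ : BandB3 := a 2 * a 1

lemma band_rel1 : a 2 * a 1 = a 0 * a 2 := by
  have h : (PresentedGroup.mk bandRels
      (FreeGroup.of 2 * FreeGroup.of 1 * (FreeGroup.of 0 * FreeGroup.of 2)⁻¹)) = 1 := by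
    apply (QuotientGroup.eq_one_iff _).mpr
    exact Subgroup.subset_normalClosure (Set.mem_insert _ _)
  rw [map_mul, map_mul, map_inv, map_mul, mul_inv_eq_one] at h
  exact h

lemma band_rel2 : a 0 * a 2 = a 1 * a 0 := by
  have h : (PresentedGroup.mk bandRels
      (FreeGroup.of 0 * FreeGroup.of 2 * (FreeGroup.of 1 * FreeGroup.of 0)⁻¹)) = 1 := by
    apply (QuotientGroup.eq_one_iff _).mpr
    exact Subgroup.subset_normalClosure (Set.mem_insert_of_mem _ rfl)
  rw [map_mul, map_mul, map_inv, map_mul, mul_inv_eq_one] at h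
  exact h

lemma delta_eq0 : δ = a 0 * a 2 := band_rel1
lemma delta_eq1 : δ = a 1 * a 0 := band_rel1.trans band_rel2

lemma conj1 : δ * a 1 = a 0 * δ := by
  conv_lhs => rw [delta_eq0]
  rw [mul_assoc]; rfl
lemma conj2 : δ * a 2 = a 1 * δ := by
  conv_lhs => rw [delta_eq1]
  rw [mul_assoc, ← delta_eq0]
lemma conj0 : δ * a 0 = a 2 * δ := by
  rw [show δ * a 0 = a 2 * (a 1 * a 0) from (mul_assoc _ _ _), ← delta_eq1]

lemma delta3_comm_aux {u v w : BandB3} (h1 : δ * u = v * δ) (h2 : δ * v = w * δ)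
    (h3 : δ * w = u * δ) : δ ^ 3 * u = u * δ ^ 3 := by
  calc δ ^ 3 * u = δ * (δ * (δ * u)) := by simp only [pow_succ, pow_zero, one_mul, mul_assoc]
  _ = δ * (δ * (v * δ)) := by rw [h1]
  _ = δ * ((δ * v) * δ) := by rw [mul_assoc]
  _ = δ * ((w * δ) * δ) := by rw [h2]
  _ = (δ * w) * (δ * δ) := by simp only [mul_assoc]
  _ = (u * δ) * (δ * δ) := by rw [h3]
  _ = u * δ ^ 3 := by simp only [pow_succ, pow_zero, one_mul, mul_assoc]

lemma delta3_comm : ∀ j : ZMod 3, δ ^ 3 * a j = a j * δ ^ 3 := by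
  have h0 := delta3_comm_aux conj0 conj2 conj1
  have h1 := delta3_comm_aux conj1 conj0 conj2
  have h2 := delta3_comm_aux conj2 conj1 conj0
  intro j
  have hj : j = 0 ∨ j = 1 ∨ j = 2 := by
    revert j; decide
  rcases hj with rfl | rfl | rfl <;> assumption

lemma delta3_mem_center : δ ^ 3 ∈ Subgroup.center BandB3 := by
  rw [Subgroup.mem_center_iff]
  intro g
  have : g ∈ Subgroup.centralizer {δ ^ 3} := by
    apply PresentedGroup.generated_by
    intro j
    rw [Subgroup.mem_centralizer_iff]
    rintro h ⟨rfl⟩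
    exact delta3_comm j
  rw [Subgroup.mem_centralizer_iff] at this
  exact (this _ rfl).symm

def K : Subgroup BandB3 := Subgroup.zpowers (δ ^ 3)

lemma K_le_center : K ≤ Subgroup.center BandB3 := by
  rw [K, Subgroup.zpowers_le]
  exact delta3_mem_center

instance K_normal : K.Normal := by
  constructor
  intro n hn g
  have hc := Subgroup.mem_center_iff.mp (K_le_center hn) g
  rw [hc, mul_assoc, mul_inv_cancel, mul_one]
  exact hn

abbrev Q3 := BandB3 ⧸ K

/-- X = σ₁σ₂σ₁, Y = σ₁σ₂ -/
def X : BandB3 := a 1 * a 2 * a 1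
def Y : BandB3 := a 1 * a 2

lemma X_eq : X = a 1 * δ := by rw [X, mul_assoc]; rfl

lemma X_sq : X * X = δ ^ 3 := by
  rw [X_eq]
  calc a 1 * δ * (a 1 * δ) = a 1 * (δ * a 1) * δ := by simp only [mul_assoc]
  _ = a 1 * (a 0 * δ) * δ := by rw [conj1]
  _ = (a 1 * a 0) * (δ * δ) := by simp only [mul_assoc]
  _ = δ * (δ * δ) := by rw [← delta_eq1]
  _ = δ ^ 3 := by simp only [pow_succ, pow_zero, one_mul, mul_assoc]

lemma Y_cube : Y * Y * Y = δ ^ 3 := by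
  have h : Y * Y * Y = a 1 * δ * (δ * a 2) := by
    rw [Y, show δ = a 2 * a 1 from rfl]; simp only [mul_assoc]
  rw [h, conj2, ← X_eq, X_sq]

lemma ha0 : (a 1)⁻¹ * a 2 * a 1 = a 0 := by
  have h : a 2 * a 1 = a 1 * a 0 := band_rel1.trans band_rel2
  rw [mul_assoc, h, ← mul_assoc, inv_mul_cancel, one_mul]

-- the free product C₂ * C₃
abbrev Gfam : Bool → Type := fun b => Multiplicative (ZMod (cond b 3 2))

abbrev P3 := Monoid.CoprodI Gfam

def xP : P3 := Monoid.CoprodI.of (i := false) (Multiplicative.ofAdd (1 : ZMod 2))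
def yP : P3 := Monoid.CoprodI.of (i := true) (Multiplicative.ofAdd (1 : ZMod 3))

lemma xP_sq : xP * xP = 1 := by
  rw [xP, ← map_mul, ← ofAdd_add, show (1 : ZMod 2) + 1 = 0 by decide, ofAdd_zero, map_one]

lemma yP_cube : yP * yP * yP = 1 := by
  rw [yP, ← map_mul, ← map_mul, ← ofAdd_add, ← ofAdd_add,
    show (1 : ZMod 3) + 1 + 1 = 0 by decide, ofAdd_zero, map_one]

lemma xP_inv : xP⁻¹ = xP := inv_eq_of_mul_eq_one_right xP_sq
lemma yP_inv : yP⁻¹ = yP * yP :=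
  inv_eq_of_mul_eq_one_right (by rw [← mul_assoc]; exact yP_cube)

lemma hxx : ∀ t : P3, xP * (xP * t) = t := fun t => by rw [← mul_assoc, xP_sq, one_mul]
lemma hyyy : ∀ t : P3, yP * (yP * (yP * t)) = t := fun t => by
  rw [← mul_assoc, ← mul_assoc, yP_cube, one_mul]
lemma hy3 : yP * (yP * yP) = 1 := by rw [← mul_assoc]; exact yP_cube

def AP : P3 := yP⁻¹ * xP
def BP : P3 := xP⁻¹ * (yP * yP)
def FP : P3 := AP⁻¹ * BP * AP

lemma hkey : FP * BP = BP * AP := by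
  simp only [FP, AP, BP, mul_inv_rev, inv_inv, xP_inv, yP_inv, mul_assoc, one_mul, mul_one,
    hxx, hyyy, xP_sq, hy3]

lemma hAF : AP * FP = BP * AP := by
  rw [FP]; group

def f : ZMod 3 → P3 := fun j => if j = 1 then AP else if j = 2 then BP else FP

lemma f1 : f 1 = AP := by simp [f]
lemma f2 : f 2 = BP := by
  rw [f, if_neg (show (2 : ZMod 3) ≠ 1 by decide), if_pos rfl]
lemma f0 : f 0 = FP := by
  rw [f, if_neg (show (0 : ZMod 3) ≠ 1 by decide), if_neg (show (0 : ZMod 3) ≠ 2 by decide)]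

lemma hrels : ∀ r ∈ bandRels, FreeGroup.lift f r = 1 := by
  intro r hr
  rcases hr with rfl | rfl
  · simp only [map_mul, map_inv, FreeGroup.lift_apply_of, f1, f2, f0, mul_inv_eq_one]
    exact hkey.symm
  · simp only [map_mul, map_inv, FreeGroup.lift_apply_of, f1, f2, f0, mul_inv_eq_one]
    exact hkey.trans hAF.symm

def φ : BandB3 →* P3 := PresentedGroup.toGroup hrels

lemma φ_a (j : ZMod 3) : φ (a j) = f j := PresentedGroup.toGroup.of hrels

lemma φX : φ X = xP := by
  rw [X, map_mul, map_mul, φ_a, φ_a, f1, f2, AP, BP]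
  group

lemma φY : φ Y = yP := by
  rw [Y, map_mul, φ_a, φ_a, f1, f2, AP, BP]
  group

def homC (n : ℕ) {H : Type*} [Group H] (g : H) (h : g ^ (n : ℕ) = 1) :
    Multiplicative (ZMod n) →* H :=
  AddMonoidHom.toMultiplicativeLeft
    (ZMod.lift n ⟨zmultiplesHom (Additive H) (Additive.ofMul g), by
      simp only [zmultiplesHom_apply, ← ofMul_zpow, zpow_natCast, h, ofMul_one]⟩)

lemma homC_one (n : ℕ) {H : Type*} [Group H] (g : H) (h : g ^ (n : ℕ) = 1) :
    homC n g h (Multiplicative.ofAdd (1 : ZMod n)) = g := by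
  have h1 : (1 : ZMod n) = ((1 : ℤ) : ZMod n) := by norm_num
  rw [homC, AddMonoidHom.toMultiplicativeLeft_apply_apply]
  rw [show Multiplicative.toAdd (Multiplicative.ofAdd (1 : ZMod n)) = (1 : ZMod n) from rfl, h1,
    ZMod.lift_coe]
  simp

def XQ : Q3 := QuotientGroup.mk' K X
def YQ : Q3 := QuotientGroup.mk' K Y

lemma hXQ : XQ ^ (2 : ℕ) = 1 := by
  rw [XQ, ← map_pow, pow_two, X_sq]
  exact (QuotientGroup.eq_one_iff _).mpr (Subgroup.mem_zpowers _)

lemma hYQ : YQ ^ (3 : ℕ) = 1 := by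
  rw [YQ, ← map_pow, show Y ^ 3 = Y * Y * Y by rw [pow_succ, pow_two], Y_cube]
  exact (QuotientGroup.eq_one_iff _).mpr (Subgroup.mem_zpowers _)

def ψ : P3 →* Q3 :=
  Monoid.CoprodI.lift (fun b => Bool.rec (motive := fun b => Gfam b →* Q3)
    (homC 2 XQ hXQ) (homC 3 YQ hYQ) b)

lemma ψx : ψ xP = XQ := by
  rw [xP, ψ, Monoid.CoprodI.lift_of]
  exact homC_one 2 XQ hXQ

lemma ψy : ψ yP = YQ := by
  rw [yP, ψ, Monoid.CoprodI.lift_of]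
  exact homC_one 3 YQ hYQ

lemma YinvX : Y⁻¹ * X = a 1 := by rw [X, Y]; group
lemma XinvYY : X⁻¹ * (Y * Y) = a 2 := by rw [X, Y]; group

lemma ψAP : ψ AP = QuotientGroup.mk' K (a 1) := by
  rw [AP, map_mul, map_inv, ψx, ψy, XQ, YQ, ← map_inv, ← map_mul, YinvX]

lemma ψBP : ψ BP = QuotientGroup.mk' K (a 2) := by
  rw [BP, map_mul, map_mul, map_inv, ψx, ψy, XQ, YQ, ← map_inv, ← map_mul, ← map_mul, XinvYY]

lemma ψFP : ψ FP = QuotientGroup.mk' K (a 0) := by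
  rw [FP, map_mul, map_mul, map_inv, ψAP, ψBP, ← map_inv, ← map_mul, ← map_mul, ha0]

lemma hcomp : ∀ g : BandB3, ψ (φ g) = QuotientGroup.mk' K g := by
  have : ψ.comp φ = QuotientGroup.mk' K := by
    apply PresentedGroup.ext
    intro j
    have hj : j = 0 ∨ j = 1 ∨ j = 2 := by revert j; decide
    have hφ : ∀ i : ZMod 3, (ψ.comp φ) (PresentedGroup.of i) = ψ (f i) := fun i => by
      rw [MonoidHom.comp_apply, show (PresentedGroup.of i : BandB3) = a i from rfl, φ_a]
    rcases hj with rfl | rfl | rfl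
    · rw [hφ, f0, ψFP]; rfl
    · rw [hφ, f1, ψAP]; rfl
    · rw [hφ, f2, ψBP]; rfl
  intro g
  exact DFunLike.congr_fun this g

lemma φ_surj : ∀ p : P3, ∃ g : BandB3, φ g = p := by
  intro p
  induction p using Monoid.CoprodI.induction_on with
  | one => exact ⟨1, map_one φ⟩
  | of i m =>
    cases i with
    | false =>
      haveI : NeZero (bif false then 3 else 2) := ⟨by decide⟩
      refine ⟨X ^ (Multiplicative.toAdd m).val, ?_⟩
      rw [map_pow, φX, xP, ← map_pow]
      congr 1
      rw [← ofAdd_nsmul, nsmul_eq_mul, mul_one, ZMod.natCast_rightInverse _]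
      exact ofAdd_toAdd m
    | true =>
      haveI : NeZero (bif true then 3 else 2) := ⟨by decide⟩
      refine ⟨Y ^ (Multiplicative.toAdd m).val, ?_⟩
      rw [map_pow, φY, yP, ← map_pow]
      congr 1
      rw [← ofAdd_nsmul, nsmul_eq_mul, mul_one, ZMod.natCast_rightInverse _]
      exact ofAdd_toAdd m
  | mul x y hx hy =>
    obtain ⟨g1, h1⟩ := hx
    obtain ⟨g2, h2⟩ := hy
    exact ⟨g1 * g2, by rw [map_mul, h1, h2]⟩


/-- `δ³` generates the center of `B₃`: the center of the band-presented group
equals the cyclic subgroup generated by `δ³`. -/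
theorem center_eq_zpowers_delta_cubed :
    Subgroup.center BandB3 = Subgroup.zpowers (δ ^ 3) := by
  apply le_antisymm
  · intro z hz
    have hcentral : ∀ q : P3, q * φ z = φ z * q := by
      intro q
      obtain ⟨g, rfl⟩ := φ_surj q
      rw [← map_mul, ← map_mul, Subgroup.mem_center_iff.mp hz g]
    have hnt : ∀ j : Bool, ∃ k, k ≠ j ∧ ∃ c : Gfam k, c ≠ 1 := by
      intro j
      cases j with
      | false => exact ⟨true, by decide, Multiplicative.ofAdd (1 : ZMod 3), by decide⟩
      | true => exact ⟨false, by decide, Multiplicative.ofAdd (1 : ZMod 2), by decide⟩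
    have hone : φ z = 1 := central_eq_one hnt hcentral
    have : QuotientGroup.mk' K z = 1 := by rw [← hcomp z, hone, map_one]
    have hzK : z ∈ K := (QuotientGroup.eq_one_iff z).mp this
    exact hzK
  · exact Subgroup.zpowers_le.mpr delta3_mem_center
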